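/- Let O be a nonempty compact metric space and let μ, ν be Borel probability measures on O. Then the supremum defining the Wasserstein-type distance is attained: there exists a 1-Lipschitz function f* : O → ℝ such that ∫ f* dμ − ∫ f* dν = sup over all 1-Lipschitz f : O → ℝ of (∫ f dμ − ∫ f dν). -/

import Mathlib

open MeasureTheory BoundedContinuousFunction NNReal

/-- **Attainment of the Wasserstein-type supremum.** Let `O` be a nonempty compact metric
space and `μ`, `ν` Borel probability measures on `O`. Then there exists a 1-Lipschitz
function `f* : O → ℝ` such that
`∫ f* dμ - ∫ f* dν = sup { ∫ f dμ - ∫ f dν : f 1-Lipschitz }`. -/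
theorem lipschitz_sup_attained
    {O : Type*} [MetricSpace O] [CompactSpace O] [Nonempty O]
    [MeasurableSpace O] [BorelSpace O]
    (μ ν : Measure O) [IsProbabilityMeasure μ] [IsProbabilityMeasure ν] :
    ∃ fstar : O → ℝ, LipschitzWith 1 fstar ∧
      ∫ x, fstar x ∂μ - ∫ x, fstar x ∂ν =
        sSup {r : ℝ | ∃ f : O → ℝ, LipschitzWith 1 f ∧
          r = ∫ x, f x ∂μ - ∫ x, f x ∂ν} := by
  classical
  set x₀ : O := Classical.arbitrary O
  set D : ℝ := Metric.diam (Set.univ : Set O) with hD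
  -- the set of normalized 1-Lipschitz bounded continuous functions
  set A : Set (O →ᵇ ℝ) := {f | LipschitzWith 1 ⇑f ∧ f x₀ = 0} with hA
  -- A is closed
  have hclosed : IsClosed A := by
    have h1 : A = (⋂ (x : O), ⋂ (y : O),
        {f : O →ᵇ ℝ | dist (f x) (f y) ≤ (1 : ℝ≥0) * dist x y}) ∩
        {f : O →ᵇ ℝ | f x₀ = 0} := by
      ext f
      simp only [hA, Set.mem_inter_iff, Set.mem_iInter, Set.mem_setOf_eq,
        lipschitzWith_iff_dist_le_mul]
    rw [h1]
    refine IsClosed.inter (isClosed_iInter fun x => isClosed_iInter fun y => ?_) ?_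
    · exact isClosed_le (by continuity) continuous_const
    · exact isClosed_eq (by continuity) continuous_const
  -- values of members of A lie in a compact ball
  have hin : ∀ f : O →ᵇ ℝ, ∀ x : O, f ∈ A → f x ∈ Metric.closedBall (0 : ℝ) D := by
    intro f x hf
    have : dist (f x) (f x₀) ≤ dist x x₀ := by
      simpa using (lipschitzWith_iff_dist_le_mul.1 hf.1) x x₀
    have hx : dist x x₀ ≤ D :=
      Metric.dist_le_diam_of_mem isCompact_univ.isBounded (Set.mem_univ _) (Set.mem_univ _)
    simp only [Metric.mem_closedBall]
    calc dist (f x) 0 = dist (f x) (f x₀) := by rw [hf.2]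
      _ ≤ dist x x₀ := this
      _ ≤ D := hx
  -- A is equicontinuous
  have hequi : Equicontinuous ((↑) : A → O → ℝ) := by
    apply Metric.equicontinuous_of_continuity_modulus id
    · simpa using Filter.tendsto_id (α := ℝ)
    · rintro x y ⟨f, hf⟩
      simpa using (lipschitzWith_iff_dist_le_mul.1 hf.1) x y
  -- A is compact
  have hAcomp : IsCompact A :=
    BoundedContinuousFunction.arzela_ascoli₂ (Metric.closedBall 0 D)
      (isCompact_closedBall 0 D) A hclosed hin hequi
  -- A is nonempty
  have hA0 : (0 : O →ᵇ ℝ) ∈ A := by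
    refine ⟨?_, rfl⟩
    exact LipschitzWith.const' (0 : ℝ)
  -- the functional Φ is continuous
  have hlip : ∀ m : Measure O, ∀ _ : IsProbabilityMeasure m,
      LipschitzWith 1 (fun f : O →ᵇ ℝ => ∫ x, f x ∂m) := by
    intro m hm
    apply LipschitzWith.of_dist_le_mul
    intro f g
    rw [Real.dist_eq, ← integral_sub (f.integrable m) (g.integrable m)]
    have : ∀ x, f x - g x = (f - g) x := fun x => rfl
    simp only [this]
    calc |∫ x, (f - g) x ∂m| = ‖∫ x, (f - g) x ∂m‖ := rfl
      _ ≤ ‖f - g‖ := (f - g).norm_integral_le_norm m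
      _ = 1 * dist f g := by rw [one_mul, dist_eq_norm]
  have hΦ : Continuous (fun f : O →ᵇ ℝ => ∫ x, f x ∂μ - ∫ x, f x ∂ν) :=
    ((hlip μ inferInstance).continuous).sub ((hlip ν inferInstance).continuous)
  -- get the maximizer on A
  obtain ⟨g, hgA, hge⟩ := hAcomp.exists_isMaxOn ⟨0, hA0⟩ hΦ.continuousOn
  refine ⟨⇑g, hgA.1, ?_⟩
  -- the value at g is the greatest element of the set
  have hgreat : IsGreatest {r : ℝ | ∃ f : O → ℝ, LipschitzWith 1 f ∧
      r = ∫ x, f x ∂μ - ∫ x, f x ∂ν} (∫ x, g x ∂μ - ∫ x, g x ∂ν) := by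
    constructor
    · exact ⟨⇑g, hgA.1, rfl⟩
    · rintro r ⟨f, hf, rfl⟩
      -- normalize f
      set c : ℝ := f x₀ with hc
      set F : O →ᵇ ℝ := BoundedContinuousFunction.mkOfCompact
        ⟨fun x => f x - c, (hf.continuous.sub continuous_const)⟩ with hF
      have hFA : F ∈ A := by
        constructor
        · apply lipschitzWith_iff_dist_le_mul.2
          intro x y
          have : dist (f x - c) (f y - c) = dist (f x) (f y) := dist_sub_right _ _ _
          simpa [hF, this] using lipschitzWith_iff_dist_le_mul.1 hf x y
        · simp [hF, hc]
      have hfi : ∀ m : Measure O, ∀ _ : IsProbabilityMeasure m, Integrable f m := by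
        intro m hm
        have := (BoundedContinuousFunction.mkOfCompact ⟨f, hf.continuous⟩).integrable m
        exact this
      have key : ∀ m : Measure O, ∀ _ : IsProbabilityMeasure m,
          ∫ x, F x ∂m = ∫ x, f x ∂m - c := by
        intro m hm
        have : ∀ x, F x = f x - c := fun x => rfl
        simp only [this]
        rw [integral_sub (hfi m hm) (integrable_const c), integral_const]
        simp
      have hval : ∫ x, f x ∂μ - ∫ x, f x ∂ν = ∫ x, F x ∂μ - ∫ x, F x ∂ν := by
        rw [key μ inferInstance, key ν inferInstance]; ring
      rw [hval]
      exact hge hFA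
  exact (hgreat.csSup_eq).symm
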